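/- Let (K,≿) be a problem with order-preserving preferences whose induced problem without externalities has a nonempty stable set. Then (K,≿) itself has a nonempty stable set. -/
import Mathlib


/-- A partition of the agent set `N`, encoded by the map sending each agent to her coalition. -/
structure Partn (N : Type*) where
  cell : N → Set N
  mem_cell : ∀ i, i ∈ cell i
  cell_eq : ∀ i j, j ∈ cell i → cell j = cell i

/-- Coalition `C` is formed in partition `π` (i.e. `C ∈ π`). -/
def Partn.HasCoal {N : Type*} (π : Partn N) (C : Set N) : Prop := ∃ i, π.cell i = C

/-- `D(π,π')`: agents placed in different coalitions by `π` and `π'`. -/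
def Partn.diff {N : Type*} (π π' : Partn N) : Set N := {i | π.cell i ≠ π'.cell i}

/-- A coalition formation problem: a set of admissible partitions together with
complete and transitive preferences of each agent over partitions. -/
structure CFP (N : Type*) where
  adm : Set (Partn N)
  pref : N → Partn N → Partn N → Prop
  total : ∀ i, ∀ π ∈ adm, ∀ π' ∈ adm, pref i π π' ∨ pref i π' π
  trans : ∀ i π π' π'', pref i π π' → pref i π' π'' → pref i π π''

namespace CFP
variable {N : Type*}

/-- Strict preference. -/
def spref (P : CFP N) (i : N) (π π' : Partn N) : Prop := P.pref i π π' ∧ ¬ P.pref i π' π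

/-- Unrestricted domain condition: indifference only between partitions leaving
the agent in the same coalition. -/
def NoTies (P : CFP N) : Prop :=
  ∀ i, ∀ π ∈ P.adm, ∀ π' ∈ P.adm, P.pref i π π' → P.pref i π' π → π.cell i = π'.cell i

/-- Order-preserving preferences. -/
def OrderPreserving (P : CFP N) : Prop :=
  P.NoTies ∧
  ∀ i, ∀ π ∈ P.adm, ∀ π' ∈ P.adm, ∀ τ ∈ P.adm, ∀ τ' ∈ P.adm,
    π.cell i ≠ π'.cell i → P.spref i π π' →
    τ.cell i = π.cell i → τ'.cell i = π'.cell i → P.spref i τ τ'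

/-- `π` is myopically blocked by coalition `C` via `π'`. -/
def Blocks (P : CFP N) (C : Set N) (π π' : Partn N) : Prop :=
  π ∈ P.adm ∧ π' ∈ P.adm ∧ C.Nonempty ∧
  (∀ i ∈ C, P.pref i π' π) ∧
  (∃ j ∈ C, P.spref j π' π) ∧
  (∀ j, j ∉ C → (π.cell j ∩ C).Nonempty → π'.cell j = {j}) ∧
  (∀ j, π.cell j ∩ C = ∅ → π'.cell j = π.cell j)

/-- The (myopic) core. -/
def Core (P : CFP N) : Set (Partn N) :=
  {π | π ∈ P.adm ∧ ¬ ∃ C π', P.Blocks C π π'}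

/-- The set of (myopically) stable partitions. -/
def StableSet (P : CFP N) : Set (Partn N) :=
  {π | π ∈ P.adm ∧ ¬ ∃ C π', P.Blocks C π π' ∧ π'.HasCoal C}

/-- `V` is a top-partition collection: it consists exactly of the `|V|`-best
partitions of every agent, i.e. every agent strictly prefers every member of `V`
to every admissible partition outside `V`. -/
def TopCollection (P : CFP N) (V : Set (Partn N)) : Prop :=
  V.Nonempty ∧ V ⊆ P.adm ∧
  ∀ i, ∀ π ∈ V, ∀ π' ∈ P.adm, π' ∉ V → P.spref i π π'

/-- Effectiveness of a top-partition collection. -/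
def Effective (P : CFP N) (V : Set (Partn N)) : Prop :=
  ∀ π ∈ V, ∀ π' ∈ V, π ≠ π' →
    ∃ S : Set N, S.Nonempty ∧ S ⊆ π.diff π' ∧ π.HasCoal S ∧ ∀ i ∈ S, P.spref i π π'

/-- Weak effectiveness of a top-partition collection. -/
def WeakEffective (P : CFP N) (V : Set (Partn N)) : Prop :=
  ∀ π ∈ V, ∀ π' ∈ V, π ≠ π' → ∀ C : Set N,
    π'.HasCoal C →
    (∀ i ∈ C, π'.cell i = C) →
    (∀ i, i ∉ C →
      (π.cell i ∩ C = ∅ → π'.cell i = π.cell i) ∧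
      ((π.cell i ∩ C).Nonempty → π'.cell i = {i})) →
    ∃ j ∈ C, P.spref j π π'

/-- Domination: `π'` dominates `π` iff some coalition formed in `π'` blocks `π` via `π'`. -/
def Dom (P : CFP N) (π' π : Partn N) : Prop :=
  ∃ C, P.Blocks C π π' ∧ π'.HasCoal C

/-- Absorbing set for the myopic domination relation. -/
def Absorbing (P : CFP N) (A : Set (Partn N)) : Prop :=
  A.Nonempty ∧ A ⊆ P.adm ∧
  ∀ π ∈ A, ∀ π' ∈ P.adm, π' ≠ π → (Relation.TransGen P.Dom π' π ↔ π' ∈ A)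

/-- Weak-myopic blocking (condition (iii) of myopic blocking is dropped). -/
def WeakBlocks (P : CFP N) (C : Set N) (π π' : Partn N) : Prop :=
  π ∈ P.adm ∧ π' ∈ P.adm ∧ C.Nonempty ∧
  (∀ i ∈ C, P.pref i π' π) ∧
  (∃ j ∈ C, P.spref j π' π) ∧
  (∀ j, π.cell j ∩ C = ∅ → π'.cell j = π.cell j)

/-- The weak myopic core. -/
def WeakCore (P : CFP N) : Set (Partn N) :=
  {π | π ∈ P.adm ∧ ¬ ∃ C π', P.WeakBlocks C π π'}

/-- `Q` is the problem without externalities induced by the order-preserving problem `P`. -/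
def Induces (P Q : CFP N) : Prop :=
  Q.adm = P.adm ∧
  ∀ i, ∀ π ∈ P.adm, ∀ π' ∈ P.adm,
    (π.cell i = π'.cell i → Q.pref i π π' ∧ Q.pref i π' π) ∧
    (π.cell i ≠ π'.cell i → (P.spref i π π' ↔ Q.spref i π π'))

/-- Prudent blocking: every member of `C` compares `π` with her *worst* partition
placing her in `π'`'s coalition (equivalently, with all such partitions). -/
def PrudentBlocks (P : CFP N) (C : Set N) (π π' : Partn N) : Prop :=
  π ∈ P.adm ∧ π' ∈ P.adm ∧ C.Nonempty ∧
  (∀ i ∈ C, ∀ τ ∈ P.adm, τ.cell i = π'.cell i → P.pref i τ π) ∧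
  (∃ j ∈ C, ∀ τ ∈ P.adm, τ.cell j = π'.cell j → P.spref j τ π)

/-- Optimistic blocking: every member of `C` compares `π` with her *best* partition
placing her in `π'`'s coalition (equivalently, with some such partition). -/
def OptBlocks (P : CFP N) (C : Set N) (π π' : Partn N) : Prop :=
  π ∈ P.adm ∧ π' ∈ P.adm ∧ C.Nonempty ∧
  (∀ i ∈ C, ∃ τ ∈ P.adm, τ.cell i = π'.cell i ∧ P.pref i τ π) ∧
  (∃ j ∈ C, ∃ τ ∈ P.adm, τ.cell j = π'.cell j ∧ P.spref j τ π)

def PrudentDom (P : CFP N) (π' π : Partn N) : Prop :=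
  ∃ C, P.PrudentBlocks C π π' ∧ π'.HasCoal C

def OptDom (P : CFP N) (π' π : Partn N) : Prop :=
  ∃ C, P.OptBlocks C π π' ∧ π'.HasCoal C

def PrudentAbsorbing (P : CFP N) (A : Set (Partn N)) : Prop :=
  A.Nonempty ∧ A ⊆ P.adm ∧
  ∀ π ∈ A, ∀ π' ∈ P.adm, π' ≠ π → (Relation.TransGen P.PrudentDom π' π ↔ π' ∈ A)

def OptAbsorbing (P : CFP N) (A : Set (Partn N)) : Prop :=
  A.Nonempty ∧ A ⊆ P.adm ∧
  ∀ π ∈ A, ∀ π' ∈ P.adm, π' ≠ π → (Relation.TransGen P.OptDom π' π ↔ π' ∈ A)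

end CFP

lemma Partn.ext' {N : Type*} {π π' : Partn N} (h : π.cell = π'.cell) : π = π' := by
  cases π; cases π'; simp_all

lemma CFP.pref_refl {N : Type*} (P : CFP N) (i : N) {π : Partn N} (h : π ∈ P.adm) :
    P.pref i π π := by
  rcases P.total i π h π h with h' | h' <;> exact h'

theorem stable_nonempty_of_induced {N : Type*} (P R : CFP N)
    (hP : P.OrderPreserving) (hInd : CFP.Induces P R)
    (hne : R.StableSet.Nonempty) : P.StableSet.Nonempty := by
  obtain ⟨π, hπadm, hπnb⟩ := hne
  refine ⟨π, hInd.1 ▸ hπadm, ?_⟩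
  rintro ⟨C, π', hB, hHC⟩
  obtain ⟨h1, h2, h3, h4, ⟨j, hjC, hjs⟩, h6, h7⟩ := hB
  obtain ⟨k, hk⟩ := hHC
  -- every member of C has π'-cell C
  have hcellC : ∀ i ∈ C, π'.cell i = C := by
    intro i hi
    rw [← hk] at hi ⊢
    exact π'.cell_eq k i hi
  -- the strict witness must change cells
  have hjne : π.cell j ≠ π'.cell j := by
    intro heq
    -- then π = π' and spref j π π is absurd
    have hπjC : π.cell j = C := heq.trans (hcellC j hjC)
    have hall : ∀ i ∈ C, π.cell i = C := by
      intro i hi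
      have : i ∈ π.cell j := hπjC ▸ hi
      exact (π.cell_eq j i this).trans hπjC
    have hcells : π'.cell = π.cell := by
      funext m
      by_cases hm : m ∈ C
      · rw [hcellC m hm, hall m hm]
      · have hempty : π.cell m ∩ C = ∅ := by
          ext x
          simp only [Set.mem_inter_iff, Set.mem_empty_iff_false, iff_false, not_and]
          intro hx hxC
          have : π.cell x = π.cell m := π.cell_eq m x hx
          have : m ∈ C := by
            have hmx : m ∈ π.cell x := this ▸ π.mem_cell m
            rw [hall x hxC] at hmx
            exact hmx
          exact hm this
        exact h7 m hempty
    have : π' = π := Partn.ext' hcells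
    rw [this] at hjs
    exact hjs.2 hjs.1
  -- members weakly prefer in R
  have h4' : ∀ i ∈ C, R.pref i π' π := by
    intro i hi
    by_cases hceq : π.cell i = π'.cell i
    · exact ((hInd.2 i π' h2 π h1).1 hceq.symm).1
    · have hs : P.spref i π' π := by
        refine ⟨h4 i hi, fun hba => ?_⟩
        exact hceq ((hP.1 i π' h2 π h1 (h4 i hi) hba).symm)
      exact (((hInd.2 i π' h2 π h1).2 (fun h => hceq h.symm)).mp hs).1
  -- strict witness in R
  have h5' : ∃ j' ∈ C, R.spref j' π' π := by
    refine ⟨j, hjC, ?_⟩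
    exact ((hInd.2 j π' h2 π h1).2 (fun h => hjne h.symm)).mp hjs
  exact hπnb ⟨C, π', ⟨hInd.1 ▸ h1, hInd.1 ▸ h2, h3, h4', h5', h6, h7⟩, k, hk⟩
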